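/- Existence and uniqueness for covariance selection (Proposition B.2, item 1, after Dempster): given a symmetric positive definite matrix Σ̃ ∈ ℝ^{n×n} and a symmetric edge set E, there exists a unique symmetric positive definite matrix Σ̂ ∈ ℝ^{n×n} such that (i) Σ̂_{γγ} = Σ̃_{γγ} for every γ, (ii) Σ̂_{γμ} = Σ̃_{γμ} for every (γ,μ) ∈ E, and (iii) (Σ̂^{−1})_{γμ} = 0 for every pair γ ≠ μ with (γ,μ) ∉ E. -/

import Mathlib

open Matrix

namespace CovSel

open Polynomial

variable {n : ℕ}


lemma dp_entry (P : Matrix (Fin n) (Fin n) ℝ) (i j : Fin n) :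
    Pi.single i (1:ℝ) ⬝ᵥ P *ᵥ Pi.single j 1 = P i j := by
  rw [Matrix.mulVec_single, single_dotProduct]
  simp

lemma dp_symm {A : Matrix (Fin n) (Fin n) ℝ} (hA : A.IsHermitian) (x y : Fin n → ℝ) :
    x ⬝ᵥ A *ᵥ y = y ⬝ᵥ A *ᵥ x := by
  have hAt : Aᵀ = A := by
    have := hA; rwa [Matrix.IsHermitian, conjTranspose_eq_transpose_of_trivial] at this
  rw [Matrix.dotProduct_mulVec, ← Matrix.mulVec_transpose, hAt, dotProduct_comm]

lemma mulVec_dp {A : Matrix (Fin n) (Fin n) ℝ} (hA : A.IsHermitian) (x w : Fin n → ℝ) :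
    x ⬝ᵥ A *ᵥ w = (A *ᵥ x) ⬝ᵥ w := by
  have hAt : Aᵀ = A := by
    have := hA; rwa [Matrix.IsHermitian, conjTranspose_eq_transpose_of_trivial] at this
  rw [Matrix.dotProduct_mulVec, ← Matrix.mulVec_transpose, hAt]

lemma cs_ineq {A : Matrix (Fin n) (Fin n) ℝ} (hA : A.PosSemidef) (x y : Fin n → ℝ) :
    (x ⬝ᵥ A *ᵥ y)^2 ≤ (x ⬝ᵥ A *ᵥ x) * (y ⬝ᵥ A *ᵥ y) := by
  have key : ∀ t : ℝ, 0 ≤ (y ⬝ᵥ A *ᵥ y) * (t * t) + (2 * (x ⬝ᵥ A *ᵥ y)) * t + (x ⬝ᵥ A *ᵥ x) := by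
    intro t
    have h0 := hA.dotProduct_mulVec_nonneg (x + t • y)
    rw [star_trivial] at h0
    have hexp : (x + t • y) ⬝ᵥ A *ᵥ (x + t • y)
        = (y ⬝ᵥ A *ᵥ y) * (t * t) + (2 * (x ⬝ᵥ A *ᵥ y)) * t + (x ⬝ᵥ A *ᵥ x) := by
      rw [Matrix.mulVec_add, Matrix.mulVec_smul]
      simp only [add_dotProduct, dotProduct_add, smul_dotProduct,
        dotProduct_smul, smul_eq_mul]
      rw [dp_symm hA.1 y x]; ring
    linarith [hexp ▸ h0]
  have := discrim_le_zero key
  rw [discrim] at this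
  nlinarith [this]

lemma entry_sq_le {A : Matrix (Fin n) (Fin n) ℝ} (hA : A.PosSemidef) (i j : Fin n) :
    (A i j)^2 ≤ A i i * A j j := by
  simpa [dp_entry] using cs_ineq hA (Pi.single i 1) (Pi.single j 1)

lemma dp_self_nonneg (x : Fin n → ℝ) : 0 ≤ x ⬝ᵥ x :=
  Finset.sum_nonneg fun i _ => mul_self_nonneg (x i)

lemma sq_le_dp_self (x : Fin n → ℝ) (i : Fin n) : x i * x i ≤ x ⬝ᵥ x :=
  Finset.single_le_sum (fun k _ => mul_self_nonneg (x k)) (Finset.mem_univ i)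

lemma posDef_of_det_ne_zero {A : Matrix (Fin n) (Fin n) ℝ} (hA : A.PosSemidef)
    (hdet : A.det ≠ 0) : A.PosDef := by
  refine Matrix.PosDef.of_dotProduct_mulVec_pos hA.1 fun x hx => ?_
  rcases (hA.dotProduct_mulVec_nonneg x).lt_or_eq with h | h
  · exact h
  · exfalso
    have h0 : A *ᵥ x = 0 := (hA.dotProduct_mulVec_zero_iff x).mp h.symm
    have : x = 0 := by
      have := congrArg (fun v => A⁻¹ *ᵥ v) h0
      simpa [Matrix.mulVec_mulVec,
        Matrix.nonsing_inv_mul A (isUnit_iff_ne_zero.mpr hdet)] using this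
    exact hx this

lemma diag_pos {A : Matrix (Fin n) (Fin n) ℝ} (hA : A.PosDef) (i : Fin n) : 0 < A i i := by
  have hne : (Pi.single i (1:ℝ) : Fin n → ℝ) ≠ 0 := by
    intro h
    have := congrFun h i
    simp at this
  have := hA.dotProduct_mulVec_pos hne
  rwa [star_trivial, dp_entry] at this

lemma coercive (hn : 0 < n) {A : Matrix (Fin n) (Fin n) ℝ} (hA : A.PosDef) :
    ∃ c > 0, ∀ x : Fin n → ℝ, c * (x ⬝ᵥ x) ≤ x ⬝ᵥ A *ᵥ x := by
  classical
  set B := A⁻¹ with hBdef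
  have hB : B.PosDef := hA.inv
  set S : ℝ := ∑ i : Fin n, ∑ j : Fin n, |B i j| with hS
  have hSpos : 0 < S := by
    have i0 : Fin n := ⟨0, hn⟩
    have h1 : |B i0 i0| ≤ ∑ j : Fin n, |B i0 j| :=
      Finset.single_le_sum (f := fun j => |B i0 j|) (fun k _ => abs_nonneg _)
        (Finset.mem_univ i0)
    have h2 : (∑ j : Fin n, |B i0 j|) ≤ S :=
      Finset.single_le_sum (f := fun i => ∑ j : Fin n, |B i j|)
        (fun k _ => Finset.sum_nonneg fun l _ => abs_nonneg _) (Finset.mem_univ i0)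
    have := diag_pos hB i0
    calc (0:ℝ) < |B i0 i0| := by positivity
    _ ≤ S := h1.trans h2
  have hBbound : ∀ x : Fin n → ℝ, x ⬝ᵥ B *ᵥ x ≤ S * (x ⬝ᵥ x) := by
    intro x
    have hterm : ∀ i j : Fin n, x i * (B i j * x j) ≤ |B i j| * (x ⬝ᵥ x) := by
      intro i j
      have hii := sq_le_dp_self x i
      have hjj := sq_le_dp_self x j
      have h1 : x i * (B i j * x j) ≤ |B i j| * |x i * x j| := by
        calc x i * (B i j * x j) ≤ |x i * (B i j * x j)| := le_abs_self _
        _ = |B i j| * |x i * x j| := by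
            rw [show x i * (B i j * x j) = B i j * (x i * x j) by ring, abs_mul]
      have h2 : |x i * x j| ≤ x ⬝ᵥ x := by
        rw [abs_mul]
        nlinarith [abs_nonneg (x i), abs_nonneg (x j), sq_abs (x i), sq_abs (x j)]
      calc x i * (B i j * x j) ≤ |B i j| * |x i * x j| := h1
      _ ≤ |B i j| * (x ⬝ᵥ x) := mul_le_mul_of_nonneg_left h2 (abs_nonneg _)
    calc x ⬝ᵥ B *ᵥ x = ∑ i : Fin n, ∑ j : Fin n, x i * (B i j * x j) := by
          simp [dotProduct, Matrix.mulVec, Finset.mul_sum]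
    _ ≤ ∑ i : Fin n, ∑ j : Fin n, |B i j| * (x ⬝ᵥ x) :=
          Finset.sum_le_sum fun i _ => Finset.sum_le_sum fun j _ => hterm i j
    _ = S * (x ⬝ᵥ x) := by rw [hS, Finset.sum_mul]; simp [Finset.sum_mul]
  refine ⟨1/S, by positivity, fun x => ?_⟩
  rcases (dp_self_nonneg x).eq_or_lt with h0 | h0
  · have hx0 : x = 0 := by
      rwa [eq_comm, dotProduct_self_eq_zero] at h0
    simp [hx0]
  · have hdet : A.det ≠ 0 := ne_of_gt hA.det_pos
    have hABx : A *ᵥ (B *ᵥ x) = x := by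
      rw [Matrix.mulVec_mulVec, hBdef, Matrix.mul_nonsing_inv A (isUnit_iff_ne_zero.mpr hdet),
        Matrix.one_mulVec]
    have hcs : (x ⬝ᵥ A *ᵥ (B *ᵥ x))^2
        ≤ (x ⬝ᵥ A *ᵥ x) * ((B *ᵥ x) ⬝ᵥ A *ᵥ (B *ᵥ x)) := cs_ineq hA.posSemidef _ _
    rw [hABx] at hcs
    have h3 : (B *ᵥ x) ⬝ᵥ x = x ⬝ᵥ B *ᵥ x := dotProduct_comm _ _
    rw [h3] at hcs
    have hAx : 0 ≤ x ⬝ᵥ A *ᵥ x := by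
      have := hA.posSemidef.dotProduct_mulVec_nonneg x; rwa [star_trivial] at this
    have hcs2 : (x ⬝ᵥ x)^2 ≤ (x ⬝ᵥ A *ᵥ x) * (S * (x ⬝ᵥ x)) := by
      calc (x ⬝ᵥ x)^2 ≤ (x ⬝ᵥ A *ᵥ x) * (x ⬝ᵥ B *ᵥ x) := hcs
      _ ≤ (x ⬝ᵥ A *ᵥ x) * (S * (x ⬝ᵥ x)) := mul_le_mul_of_nonneg_left (hBbound x) hAx
    rw [div_mul_eq_mul_div, one_mul, div_le_iff₀ hSpos]
    nlinarith [hcs2, h0, hAx, hSpos]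

lemma trace_mul_std (M : Matrix (Fin n) (Fin n) ℝ) (i j : Fin n) :
    Matrix.trace (M * Matrix.single i j (1:ℝ)) = M j i := by
  classical
  rw [Matrix.trace]
  rw [Finset.sum_eq_single j]
  · simp [Matrix.diag, Matrix.mul_single_apply_same]
  · intro b _ hb
    exact Matrix.mul_single_apply_of_ne (c := (1:ℝ)) i j b b hb M
  · simp


lemma isClosed_psd : IsClosed {A : Matrix (Fin n) (Fin n) ℝ | A.PosSemidef} := by
  have : {A : Matrix (Fin n) (Fin n) ℝ | A.PosSemidef}
      = {A : Matrix (Fin n) (Fin n) ℝ | Aᴴ = A}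
        ∩ ⋂ x : Fin n → ℝ, {A : Matrix (Fin n) (Fin n) ℝ | 0 ≤ star x ⬝ᵥ A *ᵥ x} := by
    ext A
    simp only [Set.mem_setOf_eq, Set.mem_inter_iff, Set.mem_iInter]
    exact ⟨fun h => ⟨h.1, h.dotProduct_mulVec_nonneg⟩, fun h => PosSemidef.of_dotProduct_mulVec_nonneg h.1 h.2⟩
  rw [this]
  refine IsClosed.inter (isClosed_eq ?_ continuous_id) (isClosed_iInter fun x => ?_)
  · exact continuous_id.matrix_conjTranspose
  · exact isClosed_le continuous_const
      (continuous_const.dotProduct (continuous_id.matrix_mulVec continuous_const))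

lemma isCompact_box (R : ℝ) :
    IsCompact {A : Matrix (Fin n) (Fin n) ℝ | ∀ i j, A i j ∈ Set.Icc (-R) R} := by
  have h : IsCompact (Set.pi Set.univ fun _ : Fin n =>
      (Set.pi Set.univ fun _ : Fin n => Set.Icc (-R) R)) :=
    isCompact_univ_pi fun _ => isCompact_univ_pi fun _ => isCompact_Icc
  have heq : {A : Matrix (Fin n) (Fin n) ℝ | ∀ i j, A i j ∈ Set.Icc (-R) R}
      = (Set.pi Set.univ fun _ : Fin n =>
          (Set.pi Set.univ fun _ : Fin n => Set.Icc (-R) R)) := by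
    ext A
    constructor
    · intro hA
      intro i _
      intro j _
      exact hA i j
    · intro hA i j
      exact hA i (Set.mem_univ i) j (Set.mem_univ j)
  rw [heq]
  exact h

lemma firstOrder (hn : 0 < n) (St : Matrix (Fin n) (Fin n) ℝ)
    (E : Set (Fin n × Fin n))
    (hEsymm : ∀ γ μ : Fin n, (γ, μ) ∈ E → (μ, γ) ∈ E)
    {K : Set (Matrix (Fin n) (Fin n) ℝ)}
    (hKdef : K = {A : Matrix (Fin n) (Fin n) ℝ | A.PosSemidef ∧ (∀ γ, A γ γ = St γ γ) ∧
      (∀ γ μ : Fin n, (γ, μ) ∈ E → A γ μ = St γ μ)})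
    {Sh : Matrix (Fin n) (Fin n) ℝ} (hShK : Sh ∈ K) (hShPD : Sh.PosDef)
    (hShmax : IsMaxOn Matrix.det K Sh)
    {γ μ : Fin n} (hne : γ ≠ μ) (hnE : (γ, μ) ∉ E) : Sh⁻¹ γ μ = 0 := by
  classical
  by_contra hc0
  rw [hKdef] at hShK
  obtain ⟨hShpsd, hShdiag, hShE⟩ := hShK
  have hdetpos : 0 < Sh.det := hShPD.det_pos
  set Δ : Matrix (Fin n) (Fin n) ℝ := Matrix.single γ μ 1 + Matrix.single μ γ 1 with hΔdef
  have hΔapply : ∀ a b : Fin n, ¬(γ = a ∧ μ = b) → ¬(μ = a ∧ γ = b) → Δ a b = 0 := by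
    intro a b h1 h2
    show Matrix.single γ μ (1:ℝ) a b + Matrix.single μ γ (1:ℝ) a b = 0
    rw [Matrix.single_apply_of_ne γ μ 1 a b h1,
      Matrix.single_apply_of_ne μ γ 1 a b h2, add_zero]
  have hΔdiag : ∀ a : Fin n, Δ a a = 0 := by
    intro a
    refine hΔapply a a (fun h => hne (h.1.trans h.2.symm)) (fun h => hne (h.2.trans h.1.symm))
  have hΔE : ∀ a b : Fin n, (a, b) ∈ E → Δ a b = 0 := by
    intro a b hab
    refine hΔapply a b (fun h => ?_) (fun h => ?_)
    · obtain ⟨rfl, rfl⟩ := h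
      exact hnE hab
    · obtain ⟨rfl, rfl⟩ := h
      exact hnE (hEsymm _ _ hab)
  have hΔherm : Δᴴ = Δ := by
    rw [hΔdef]
    ext a b
    simp only [Matrix.conjTranspose_apply, Matrix.add_apply, star_trivial]
    by_cases h1 : γ = a ∧ μ = b
    · obtain ⟨rfl, rfl⟩ := h1
      simp [hne, hne.symm]
    · by_cases h2 : μ = a ∧ γ = b
      · obtain ⟨rfl, rfl⟩ := h2
        simp [hne, hne.symm]
      · rw [Matrix.single_apply_of_ne γ μ 1 b a (fun h => h2 ⟨h.2, h.1⟩),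
          Matrix.single_apply_of_ne μ γ 1 b a (fun h => h1 ⟨h.2, h.1⟩),
          Matrix.single_apply_of_ne γ μ 1 a b h1,
          Matrix.single_apply_of_ne μ γ 1 a b h2]
  have hquad : ∀ x : Fin n → ℝ, x ⬝ᵥ Δ *ᵥ x = 2 * (x γ * x μ) := by
    intro x
    rw [hΔdef, Matrix.add_mulVec, Matrix.single_mulVec, Matrix.single_mulVec,
      dotProduct_add]
    have hupd : ∀ (i : Fin n) (v : ℝ), Function.update (0 : Fin n → ℝ) i v = Pi.single i v :=
      fun _ _ => rfl
    rw [hupd, hupd, dotProduct_single, dotProduct_single]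
    ring
  have habs : ∀ x : Fin n → ℝ, |x ⬝ᵥ Δ *ᵥ x| ≤ x ⬝ᵥ x := by
    intro x
    have h5 : ∑ k ∈ ({γ, μ} : Finset (Fin n)), x k * x k ≤ x ⬝ᵥ x :=
      Finset.sum_le_sum_of_subset_of_nonneg (Finset.subset_univ _)
        (fun k _ _ => mul_self_nonneg (x k))
    rw [Finset.sum_pair hne] at h5
    rw [hquad x]
    rw [abs_le]
    constructor
    · nlinarith [sq_nonneg (x γ + x μ)]
    · nlinarith [sq_nonneg (x γ - x μ)]
  obtain ⟨c, hcpos, hcoer⟩ := coercive hn hShPD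
  have hmem : ∀ t : ℝ, |t| ≤ c → Sh + t • Δ ∈ K := by
    intro t ht
    rw [hKdef]
    refine ⟨PosSemidef.of_dotProduct_mulVec_nonneg ?_ ?_, ?_, ?_⟩
    · show (Sh + t • Δ)ᴴ = Sh + t • Δ
      rw [Matrix.conjTranspose_add, Matrix.conjTranspose_smul, hΔherm, hShPD.1, star_trivial]
    · intro x
      rw [star_trivial, Matrix.add_mulVec, Matrix.smul_mulVec, dotProduct_add,
        dotProduct_smul, smul_eq_mul]
      have h7 : |t * (x ⬝ᵥ Δ *ᵥ x)| ≤ c * (x ⬝ᵥ x) := by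
        rw [abs_mul]
        exact mul_le_mul ht (habs x) (abs_nonneg _) hcpos.le
      have h8 := neg_abs_le (t * (x ⬝ᵥ Δ *ᵥ x))
      linarith [hcoer x]
    · intro a
      rw [Matrix.add_apply, Matrix.smul_apply, hΔdiag a, smul_eq_mul, mul_zero, add_zero]
      exact hShdiag a
    · intro a b hab
      rw [Matrix.add_apply, Matrix.smul_apply, hΔE a b hab, smul_eq_mul, mul_zero, add_zero]
      exact hShE a b hab
  have hdetle : ∀ t : ℝ, |t| ≤ c → (Sh + t • Δ).det ≤ Sh.det := fun t ht => hShmax (hmem t ht)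
  set C : Matrix (Fin n) (Fin n) ℝ := Sh⁻¹ * Δ with hCdef
  have hShdet : IsUnit Sh.det := isUnit_iff_ne_zero.mpr (ne_of_gt hdetpos)
  have hfac : ∀ t : ℝ, Sh + t • Δ = Sh * (1 + t • C) := by
    intro t
    rw [Matrix.mul_add, Matrix.mul_one, mul_smul_comm, hCdef, ← Matrix.mul_assoc,
      Matrix.mul_nonsing_inv Sh hShdet, Matrix.one_mul]
  have hdet1 : ∀ t : ℝ, |t| ≤ c → (1 + t • C).det ≤ 1 := by
    intro t ht
    have h := hdetle t ht
    rw [hfac t, Matrix.det_mul] at h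
    nth_rewrite 2 [show Sh.det = Sh.det * 1 by ring] at h
    exact (mul_le_mul_iff_right₀ hdetpos).mp h
  -- trace of C
  have hsymSh : Sh⁻¹ μ γ = Sh⁻¹ γ μ := by
    have h := congrFun (congrFun hShPD.inv.1 γ) μ
    rwa [Matrix.conjTranspose_apply, star_trivial] at h
  have htrC : Matrix.trace C = 2 * Sh⁻¹ γ μ := by
    rw [hCdef, hΔdef, Matrix.mul_add, Matrix.trace_add, trace_mul_std, trace_mul_std,
      hsymSh]
    ring
  set τ : ℝ := Matrix.trace C with hτdef
  have hτne : τ ≠ 0 := by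
    intro h
    rw [h] at htrC
    apply hc0
    linarith
  set P : Polynomial ℝ := (Matrix.det (1 + (Polynomial.X : Polynomial ℝ) • C.map Polynomial.C)).divX.divX with hPdef
  have hdetform : ∀ t : ℝ, (1 + t • C).det = 1 + τ * t + P.eval t * t^2 := by
    intro t
    rw [Matrix.det_one_add_smul t C]
  -- continuity argument
  have hfcont : Continuous fun t : ℝ => P.eval t * t := (P.continuous).mul continuous_id
  have hf0 : P.eval (0:ℝ) * (0:ℝ) = 0 := by simp
  have hca : ContinuousAt (fun t : ℝ => P.eval t * t) 0 := hfcont.continuousAt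
  rw [Metric.continuousAt_iff] at hca
  obtain ⟨δ, hδpos, hδ⟩ := hca |τ| (abs_pos.mpr hτne)
  set s : ℝ := min (δ/2) c with hsdef
  have hspos : 0 < s := lt_min (by linarith) hcpos
  have hsc : s ≤ c := min_le_right _ _
  have hsδ : s < δ := lt_of_le_of_lt (min_le_left _ _) (by linarith)
  have key : ∀ t : ℝ, |t| = s → |P.eval t * t| < |τ| := by
    intro t hts
    have h1 : dist t 0 < δ := by
      rw [Real.dist_eq, sub_zero, hts]; exact hsδ
    have h2 := hδ h1
    have h3 : |P.eval t * t| = dist (P.eval t * t) (P.eval 0 * 0) := by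
      rw [Real.dist_eq]; norm_num
    rw [h3]
    exact h2
  rcases hτne.lt_or_gt with hτneg | hτpos
  · -- take t = -s
    have hts : |(-s)| = s := by rw [abs_neg, abs_of_pos hspos]
    have h2 := hdet1 (-s) (by rw [hts]; exact hsc)
    rw [hdetform] at h2
    have h3 := key (-s) hts
    rw [abs_of_neg hτneg] at h3
    have h4 := abs_lt.mp h3
    nlinarith [h4.1, h4.2, hspos]
  · have hts : |s| = s := abs_of_pos hspos
    have h2 := hdet1 s (by rw [hts]; exact hsc)
    rw [hdetform] at h2
    have h3 := key s hts
    rw [abs_of_pos hτpos] at h3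
    have h4 := abs_lt.mp h3
    nlinarith [h4.1, h4.2, hspos]

lemma trace_inv_mul_eq (E : Set (Fin n × Fin n))
    (hEsymm : ∀ γ μ : Fin n, (γ, μ) ∈ E → (μ, γ) ∈ E)
    {A B : Matrix (Fin n) (Fin n) ℝ}
    (hz : ∀ γ μ : Fin n, γ ≠ μ → (γ, μ) ∉ E → A⁻¹ γ μ = 0)
    (hmatch : ∀ γ μ : Fin n, (γ = μ ∨ (γ, μ) ∈ E) → B γ μ = A γ μ) :
    Matrix.trace (A⁻¹ * B) = Matrix.trace (A⁻¹ * A) := by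
  classical
  simp only [Matrix.trace, Matrix.diag, Matrix.mul_apply]
  refine Finset.sum_congr rfl fun γ _ => Finset.sum_congr rfl fun μ _ => ?_
  by_cases h1 : μ = γ
  · rw [hmatch μ γ (Or.inl h1)]
  · by_cases h2 : (μ, γ) ∈ E
    · rw [hmatch μ γ (Or.inr h2)]
    · have h3 : (γ, μ) ∉ E := fun h => h2 (hEsymm _ _ h)
      rw [hz γ μ (fun h => h1 h.symm) h3, zero_mul, zero_mul]

open scoped MatrixOrder in
lemma eq_of_both (E : Set (Fin n × Fin n))
    (hEsymm : ∀ γ μ : Fin n, (γ, μ) ∈ E → (μ, γ) ∈ E)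
    {A B : Matrix (Fin n) (Fin n) ℝ} (hA : A.PosDef) (hB : B.PosDef)
    (hzA : ∀ γ μ : Fin n, γ ≠ μ → (γ, μ) ∉ E → A⁻¹ γ μ = 0)
    (hzB : ∀ γ μ : Fin n, γ ≠ μ → (γ, μ) ∉ E → B⁻¹ γ μ = 0)
    (hmatch : ∀ γ μ : Fin n, (γ = μ ∨ (γ, μ) ∈ E) → B γ μ = A γ μ) :
    B = A := by
  classical
  have hAdet : IsUnit A.det := isUnit_iff_ne_zero.mpr (ne_of_gt hA.det_pos)
  have hBdet : IsUnit B.det := isUnit_iff_ne_zero.mpr (ne_of_gt hB.det_pos)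
  -- square root of A
  have hAS : A.PosSemidef := hA.posSemidef
  set Q : Matrix (Fin n) (Fin n) ℝ := CFC.sqrt A with hQdef
  have hQpsd : Q.PosSemidef := (CFC.sqrt_nonneg A).posSemidef
  have hQQ : Q * Q = A := CFC.sqrt_mul_sqrt_self A hAS.nonneg
  have hQdet : Q.det ≠ 0 := by
    intro h
    have : A.det = 0 := by rw [← hQQ, Matrix.det_mul, h, mul_zero]
    exact (ne_of_gt hA.det_pos) this
  have hQunit : IsUnit Q.det := isUnit_iff_ne_zero.mpr hQdet
  have hQiQ : Q⁻¹ * Q = 1 := Matrix.nonsing_inv_mul Q hQunit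
  have hQQi : Q * Q⁻¹ = 1 := Matrix.mul_nonsing_inv Q hQunit
  have hQherm : Qᴴ = Q := hQpsd.1
  have hQi : (Q⁻¹)ᴴ = Q⁻¹ := by rw [Matrix.conjTranspose_nonsing_inv, hQherm]
  set M : Matrix (Fin n) (Fin n) ℝ := Q⁻¹ * (B - A) * Q⁻¹ with hMdef
  set N : Matrix (Fin n) (Fin n) ℝ := Q * B⁻¹ * Q with hNdef
  have hMherm : Mᴴ = M := by
    rw [hMdef, Matrix.conjTranspose_mul, Matrix.conjTranspose_mul, hQi,
      Matrix.conjTranspose_sub, hB.1, hA.1, Matrix.mul_assoc]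
  have h1M : Q⁻¹ * B * Q⁻¹ = 1 + M := by
    have hQAQ : Q⁻¹ * A * Q⁻¹ = 1 := by
      rw [← hQQ]
      calc Q⁻¹ * (Q * Q) * Q⁻¹ = Q⁻¹ * (Q * (Q * Q⁻¹)) := by simp only [Matrix.mul_assoc]
      _ = 1 := by rw [hQQi, Matrix.mul_one, hQiQ]
    have hM' : M = Q⁻¹ * B * Q⁻¹ - Q⁻¹ * A * Q⁻¹ := by
      rw [hMdef, Matrix.mul_sub, Matrix.sub_mul]
    rw [hM', hQAQ]
    abel
  have hNpsd : N.PosSemidef := by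
    have := (hB.inv.posSemidef).mul_mul_conjTranspose_same Q
    rwa [hQherm] at this
  have hNdetne : N.det ≠ 0 := by
    rw [hNdef, Matrix.det_mul, Matrix.det_mul, Matrix.det_nonsing_inv]
    exact mul_ne_zero (mul_ne_zero hQdet (by rw [Ring.inverse_eq_inv]; exact inv_ne_zero (ne_of_gt hB.det_pos))) hQdet
  have hNPD : N.PosDef := posDef_of_det_ne_zero hNpsd hNdetne
  -- (1 + M) * N = 1 and N * (1 + M) = 1
  have hMN1 : (1 + M) * N = 1 := by
    rw [← h1M, hNdef]
    calc Q⁻¹ * B * Q⁻¹ * (Q * B⁻¹ * Q)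
        = Q⁻¹ * B * ((Q⁻¹ * Q) * B⁻¹) * Q := by
          simp only [Matrix.mul_assoc]
    _ = Q⁻¹ * (B * B⁻¹) * Q := by rw [hQiQ, Matrix.one_mul]; simp only [Matrix.mul_assoc]
    _ = 1 := by rw [Matrix.mul_nonsing_inv B hBdet, Matrix.mul_one, hQiQ]
  have hNM1 : N * (1 + M) = 1 := by
    rw [← h1M, hNdef]
    calc Q * B⁻¹ * Q * (Q⁻¹ * B * Q⁻¹)
        = Q * B⁻¹ * ((Q * Q⁻¹) * B) * Q⁻¹ := by simp only [Matrix.mul_assoc]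
    _ = Q * (B⁻¹ * B) * Q⁻¹ := by rw [hQQi, Matrix.one_mul]; simp only [Matrix.mul_assoc]
    _ = 1 := by rw [Matrix.nonsing_inv_mul B hBdet, Matrix.mul_one, hQQi]
  have hMN : M * N = 1 - N := by
    have h := hMN1
    rw [Matrix.add_mul, Matrix.one_mul] at h
    exact eq_sub_of_add_eq' h
  have hNM : N * M = 1 - N := by
    have h := hNM1
    rw [Matrix.mul_add, Matrix.mul_one] at h
    exact eq_sub_of_add_eq' h
  -- traces
  have htrMB : Matrix.trace (A⁻¹ * B) = Matrix.trace (1 + M) := by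
    have hAinv : A⁻¹ = Q⁻¹ * Q⁻¹ := by rw [← hQQ, Matrix.mul_inv_rev]
    calc Matrix.trace (A⁻¹ * B) = Matrix.trace (Q⁻¹ * (Q⁻¹ * B)) := by
          rw [hAinv, Matrix.mul_assoc]
    _ = Matrix.trace (Q⁻¹ * B * Q⁻¹) := Matrix.trace_mul_comm _ _
    _ = Matrix.trace (1 + M) := by rw [h1M]
  have htrA : Matrix.trace (A⁻¹ * B) = Matrix.trace (A⁻¹ * A) :=
    trace_inv_mul_eq E hEsymm (fun γ μ h1 h2 => hzA γ μ h1 h2) hmatch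
  have htrM : Matrix.trace M = 0 := by
    have h1 : Matrix.trace (A⁻¹ * A) = Matrix.trace (1 : Matrix (Fin n) (Fin n) ℝ) := by
      rw [Matrix.nonsing_inv_mul A hAdet]
    have h2 := htrMB.symm.trans (htrA.trans h1)
    rw [Matrix.trace_add] at h2
    linarith [h2]
  have htrN : Matrix.trace N = Matrix.trace (1 : Matrix (Fin n) (Fin n) ℝ) := by
    have hBA : Matrix.trace (B⁻¹ * A) = Matrix.trace (B⁻¹ * B) := by
      have hmatch' : ∀ γ μ : Fin n, (γ = μ ∨ (γ, μ) ∈ E) → A γ μ = B γ μ :=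
        fun γ μ h => (hmatch γ μ h).symm
      exact trace_inv_mul_eq E hEsymm hzB hmatch'
    have h2 : Matrix.trace (B⁻¹ * A) = Matrix.trace N := by
      rw [← hQQ, hNdef, ← Matrix.mul_assoc, Matrix.trace_mul_comm (B⁻¹ * Q) Q,
        ← Matrix.mul_assoc]
    rw [← h2, hBA, Matrix.nonsing_inv_mul B hBdet]
  have htrMNM : Matrix.trace (M * N * M) = 0 := by
    have : M * N * M = M - 1 + N := by
      rw [hMN, Matrix.sub_mul, Matrix.one_mul, hNM]
      abel
    rw [this, Matrix.trace_add, Matrix.trace_sub, htrM, htrN]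
    ring
  -- MNM is PSD with zero trace: conclude M = 0
  have hMNMpsd : (M * N * M).PosSemidef := by
    have := hNpsd.mul_mul_conjTranspose_same M
    rwa [hMherm] at this
  have hdiag0 : ∀ i : Fin n, (M * N * M) i i = 0 := by
    have hnonneg : ∀ i : Fin n, 0 ≤ (M * N * M) i i := by
      intro i
      have := hMNMpsd.dotProduct_mulVec_nonneg (Pi.single i 1)
      rwa [star_trivial, dp_entry] at this
    have hsum : ∑ i : Fin n, (M * N * M) i i = 0 := htrMNM
    intro i
    exact (Finset.sum_eq_zero_iff_of_nonneg (fun k _ => hnonneg k)).mp hsum i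
      (Finset.mem_univ i)
  have hMzero : M = 0 := by
    have hcol : ∀ i : Fin n, M *ᵥ Pi.single i 1 = 0 := by
      intro i
      by_contra hne
      have hq : Pi.single i (1:ℝ) ⬝ᵥ (M * N * M) *ᵥ Pi.single i 1 = 0 := by
        rw [dp_entry, hdiag0]
      have hform : Pi.single i (1:ℝ) ⬝ᵥ (M * N * M) *ᵥ Pi.single i 1
          = (M *ᵥ Pi.single i 1) ⬝ᵥ N *ᵥ (M *ᵥ Pi.single i 1) := by
        rw [← Matrix.mulVec_mulVec, ← Matrix.mulVec_mulVec,
          mulVec_dp (show Mᴴ = M from hMherm)]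
      have := hNPD.dotProduct_mulVec_pos hne
      rw [star_trivial] at this
      rw [hform] at hq
      exact (ne_of_gt this) hq
    ext i j
    have := congrFun (hcol j) i
    rw [Matrix.mulVec_single] at this
    simpa using this
  have hBA0 : B - A = 0 := by
    have : Q * M * Q = B - A := by
      rw [hMdef, ← Matrix.mul_assoc, ← Matrix.mul_assoc, hQQi, Matrix.one_mul,
        Matrix.mul_assoc, hQiQ, Matrix.mul_one]
    rw [← this, hMzero, Matrix.mul_zero, Matrix.zero_mul]
  exact sub_eq_zero.mp hBA0

end CovSel

open CovSel

/-- **Existence and uniqueness for covariance selection** (Proposition B.2,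
item 1, after Dempster): given a symmetric positive definite `Σ̃ ∈ ℝ^{n×n}` and
a symmetric edge set `E` (of pairs of distinct indices), there is a unique
symmetric positive definite `Σ̂` that matches `Σ̃` on the diagonal and on `E`,
and whose inverse vanishes on all non-edges off the diagonal. -/
theorem covariance_selection_exists_unique
    (n : ℕ) (hn : 1 ≤ n)
    (St : Matrix (Fin n) (Fin n) ℝ) (hSt : St.PosDef)
    (E : Set (Fin n × Fin n))
    (hEsymm : ∀ γ μ : Fin n, (γ, μ) ∈ E → (μ, γ) ∈ E)
    (hEne : ∀ γ μ : Fin n, (γ, μ) ∈ E → γ ≠ μ) :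
    ∃! Sh : Matrix (Fin n) (Fin n) ℝ,
      Sh.PosDef ∧
      (∀ γ : Fin n, Sh γ γ = St γ γ) ∧
      (∀ γ μ : Fin n, (γ, μ) ∈ E → Sh γ μ = St γ μ) ∧
      (∀ γ μ : Fin n, γ ≠ μ → (γ, μ) ∉ E → Sh⁻¹ γ μ = 0) := by
  classical
  set K : Set (Matrix (Fin n) (Fin n) ℝ) :=
    {A : Matrix (Fin n) (Fin n) ℝ | A.PosSemidef ∧ (∀ γ, A γ γ = St γ γ) ∧
      (∀ γ μ : Fin n, (γ, μ) ∈ E → A γ μ = St γ μ)} with hKdef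
  have hStK : St ∈ K := ⟨hSt.posSemidef, fun _ => rfl, fun _ _ _ => rfl⟩
  -- K is closed
  have hKclosed : IsClosed K := by
    have h2 : IsClosed {A : Matrix (Fin n) (Fin n) ℝ | ∀ γ, A γ γ = St γ γ} := by
      have : {A : Matrix (Fin n) (Fin n) ℝ | ∀ γ, A γ γ = St γ γ}
          = ⋂ γ : Fin n, {A : Matrix (Fin n) (Fin n) ℝ | A γ γ = St γ γ} := by
        ext A; simp
      rw [this]
      exact isClosed_iInter fun γ =>
        isClosed_eq (continuous_id.matrix_elem γ γ) continuous_const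
    have h3 : IsClosed {A : Matrix (Fin n) (Fin n) ℝ |
        ∀ γ μ : Fin n, (γ, μ) ∈ E → A γ μ = St γ μ} := by
      have : {A : Matrix (Fin n) (Fin n) ℝ | ∀ γ μ : Fin n, (γ, μ) ∈ E → A γ μ = St γ μ}
          = ⋂ γ : Fin n, ⋂ μ : Fin n, ⋂ (_ : (γ, μ) ∈ E),
            {A : Matrix (Fin n) (Fin n) ℝ | A γ μ = St γ μ} := by
        ext A; simp
      rw [this]
      exact isClosed_iInter fun γ => isClosed_iInter fun μ => isClosed_iInter fun _ =>
        isClosed_eq (continuous_id.matrix_elem γ μ) continuous_const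
    have : K = {A : Matrix (Fin n) (Fin n) ℝ | A.PosSemidef}
        ∩ ({A : Matrix (Fin n) (Fin n) ℝ | ∀ γ, A γ γ = St γ γ}
          ∩ {A : Matrix (Fin n) (Fin n) ℝ | ∀ γ μ : Fin n, (γ, μ) ∈ E → A γ μ = St γ μ}) := by
      rfl
    rw [this]
    exact isClosed_psd.inter (h2.inter h3)
  -- K is bounded
  set R : ℝ := ∑ i : Fin n, St i i with hRdef
  have hRpos : ∀ i, St i i ≤ R :=
    fun i => Finset.single_le_sum (f := fun i => St i i)
      (fun k _ => (diag_pos hSt k).le) (Finset.mem_univ i)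
  have hR0 : 0 ≤ R := by
    have : (0:ℝ) < St ⟨0, hn⟩ ⟨0, hn⟩ := diag_pos hSt _
    linarith [hRpos ⟨0, hn⟩]
  have hKsub : K ⊆ {A : Matrix (Fin n) (Fin n) ℝ | ∀ i j, A i j ∈ Set.Icc (-R) R} := by
    rintro A ⟨hpsd, hdiag, -⟩ i j
    have h1 : (A i j)^2 ≤ A i i * A j j := entry_sq_le hpsd i j
    rw [hdiag i, hdiag j] at h1
    have h2 : St i i * St j j ≤ R * R :=
      mul_le_mul (hRpos i) (hRpos j) (diag_pos hSt j).le hR0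
    constructor
    · nlinarith [h1, h2, sq_nonneg (A i j + R), sq_nonneg (A i j - R)]
    · nlinarith [h1, h2, sq_nonneg (A i j + R), sq_nonneg (A i j - R)]
  have hKcomp : IsCompact K := (isCompact_box R).of_isClosed_subset hKclosed hKsub
  -- maximize det over K
  obtain ⟨Sh, hShK, hShmax⟩ := hKcomp.exists_isMaxOn ⟨St, hStK⟩
    ((continuous_id.matrix_det).continuousOn)
  have hdetpos : 0 < Sh.det := lt_of_lt_of_le hSt.det_pos (hShmax hStK)
  have hShPD : Sh.PosDef := posDef_of_det_ne_zero hShK.1 (ne_of_gt hdetpos)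
  have hzSh : ∀ γ μ : Fin n, γ ≠ μ → (γ, μ) ∉ E → Sh⁻¹ γ μ = 0 :=
    fun γ μ h1 h2 => firstOrder hn St E hEsymm hKdef hShK hShPD hShmax h1 h2
  refine ⟨Sh, ⟨hShPD, hShK.2.1, hShK.2.2, hzSh⟩, ?_⟩
  rintro y ⟨hyPD, hydiag, hyE, hzy⟩
  refine eq_of_both E hEsymm hShPD hyPD hzSh hzy ?_
  intro γ μ h
  rcases h with h | h
  · subst h
    rw [hydiag γ, hShK.2.1 γ]
  · rw [hyE γ μ h, hShK.2.2 γ μ h]
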